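/- arXiv:1610.01930 — 3 statements merged into one kernel-verified Lean document; each statement's English description precedes it below -/
import Mathlib

section
/- Let ℬ and 𝒜 be abelian categories and n ≥ 1. For every functor F : ℬ ⥤ 𝒜 the n-th cross effect cr_nF is strictly multi-reduced (cr_nF(X₁,…,Xₙ) is a zero object whenever some Xᵢ is a zero object), and the resulting functor cr_n : Fun(ℬ,𝒜) → Fun_*(ℬ^n,𝒜) is right adjoint to the functor Δ* : Fun_*(ℬ^n,𝒜) → Fun(ℬ,𝒜) given by precomposition with the diagonal Δ : ℬ → ℬ^n, where Fun_*(ℬ^n,𝒜) denotes the full subcategory of Fun(ℬ^n,𝒜) spanned by the strictly multi-reduced functors. -/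
open CategoryTheory CategoryTheory.Limits ZeroObject
attribute [local instance] CategoryTheory.Abelian.hasFiniteBiproducts
universe v u v' u'
variable {B : Type u} [Category.{v} B] [Abelian B]
variable {A : Type u'} [Category.{v'} A] [Abelian A]

noncomputable def collapse {n : ℕ} (X : Fin (n + 1) → B) (j : Fin (n + 1)) :
    (⨁ X) ⟶ ⨁ (X ∘ j.succAbove) :=
  biproduct.lift fun k => biproduct.π X (j.succAbove k)

noncomputable def crObj (n : ℕ) (F : B ⥤ A) (X : Fin (n + 1) → B) : A :=
  kernel (biproduct.lift fun j : Fin (n + 1) => F.map (collapse X j))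

noncomputable def crObjMapObj (n : ℕ) (F : B ⥤ A) {X Y : Fin (n + 1) → B}
    (f : ∀ i, X i ⟶ Y i) : crObj n F X ⟶ crObj n F Y :=
  kernel.map _ _ (F.map (biproduct.map f))
    (biproduct.map fun j => F.map (biproduct.map fun k => f (j.succAbove k)))
    (by
      ext j
      simp only [Category.assoc, biproduct.lift_π, biproduct.map_π, biproduct.lift_π_assoc,
        ← F.map_comp]
      congr 1
      ext k
      simp [collapse])

noncomputable def crN (n : ℕ) (F : B ⥤ A) : (Fin (n + 1) → B) ⥤ A where
  obj X := crObj n F X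
  map {X Y} f := crObjMapObj n F f
  map_id X := by
    refine (cancel_mono (kernel.ι (biproduct.lift fun j : Fin (n + 1) => F.map (collapse X j)))).1 ?_
    have h1 : biproduct.map (𝟙 X : ∀ i, X i ⟶ X i) = 𝟙 (⨁ X) := by
      ext; simp [CategoryTheory.Pi.id_apply]
    simp [crObjMapObj, crObj, kernel.map, h1]
  map_comp {X Y Z} f g := by
    refine (cancel_mono (kernel.ι (biproduct.lift fun j : Fin (n + 1) => F.map (collapse Z j)))).1 ?_
    have h1 : biproduct.map (f ≫ g : ∀ i, X i ⟶ Z i) = biproduct.map f ≫ biproduct.map g := by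
      ext; simp [CategoryTheory.Pi.comp_apply]
    simp [crObjMapObj, crObj, kernel.map, h1]

/-- the diagonal functor `ℬ ⥤ ℬ^{n+1}`. -/
def diagF (n : ℕ) : B ⥤ (Fin (n + 1) → B) := Functor.pi' fun _ => 𝟭 B

/-- the counit `Δ*(cr_{n+1} G) ⟶ G` of the adjunction `Δ* ⊣ cr_{n+1}`, whose component at `X`
is the kernel inclusion followed by `G` applied to the fold map. -/
noncomputable def crCounit (n : ℕ) (G : B ⥤ A) : diagF n ⋙ crN n G ⟶ G where
  app X := kernel.ι _ ≫ G.map (biproduct.desc fun _ : Fin (n + 1) => 𝟙 X)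
  naturality X Y f := by
    have h : biproduct.map (fun _ : Fin (n+1) => f) ≫ (biproduct.desc fun _ : Fin (n + 1) => 𝟙 Y)
        = (biproduct.desc fun _ : Fin (n + 1) => 𝟙 X) ≫ f := by ext; simp
    show crObjMapObj n G (fun _ => f) ≫ (kernel.ι _ ≫ G.map _) = (kernel.ι _ ≫ G.map _) ≫ G.map f
    simp only [crObjMapObj, kernel.map, kernel.lift_ι_assoc, Category.assoc, ← G.map_comp]
    erw [kernel.lift_ι_assoc]
    exact (Category.assoc _ _ _).trans
      (congrArg (fun t => kernel.ι (biproduct.lift fun j => G.map (collapse (fun _ => X) j)) ≫ t)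
        ((G.map_comp _ _).symm.trans ((congrArg G.map h).trans (G.map_comp _ _))))

section CrossEffectAux
variable (n : ℕ)

lemma collapse_isIso (X : Fin (n + 1) → B) (j : Fin (n + 1)) (h : IsZero (X j)) :
    IsIso (collapse X j) := by
  refine ⟨biproduct.desc fun k => biproduct.ι X (j.succAbove k), ?_, ?_⟩
  · rw [collapse, biproduct.lift_desc, ← biproduct.total, Fin.sum_univ_succAbove
      (fun m => biproduct.π X m ≫ biproduct.ι X m) j]
    simp [h.eq_of_tgt (biproduct.π X j) 0]
  · ext k k'
    by_cases hk : k = k'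
    · subst hk
      simp [collapse]
    · simp only [collapse, Category.assoc, biproduct.lift_π, biproduct.ι_desc_assoc,
        Category.id_comp,
        biproduct.ι_π_ne _ (fun hh => hk (Fin.succAbove_right_injective hh).symm),
        biproduct.ι_π_ne _ (fun hh => hk hh.symm)]

lemma crObj_isZero (F : B ⥤ A) (X : Fin (n + 1) → B) (h : ∃ i, IsZero (X i)) :
    IsZero (crObj n F X) := by
  obtain ⟨i, hi⟩ := h
  have h1 : IsIso (collapse X i) := collapse_isIso n X i hi
  have h2 : Mono ((biproduct.lift fun j : Fin (n + 1) => F.map (collapse X j)) ≫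
      biproduct.π _ i) := by
    rw [biproduct.lift_π]
    infer_instance
  have h3 : Mono (biproduct.lift fun j : Fin (n + 1) => F.map (collapse X j)) :=
    mono_of_mono _ (biproduct.π _ i)
  exact (isZero_zero A).of_iso (kernel.ofMono _)

lemma H_map_eq_zero (H : (Fin (n + 1) → B) ⥤ A)
    (hH : ∀ Xs : Fin (n + 1) → B, (∃ i, IsZero (Xs i)) → IsZero (H.obj Xs))
    {X Y : Fin (n + 1) → B} (f : X ⟶ Y) (j : Fin (n + 1)) (hf : f j = 0) :
    H.map f = 0 := by
  classical
  let X' : Fin (n + 1) → B := Function.update X j 0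
  have hX'j : X' j = 0 := Function.update_self j 0 X
  have hX'i : ∀ i, i ≠ j → X' i = X i := fun i hi => Function.update_of_ne hi 0 X
  let g : X ⟶ X' := fun i => if h : i = j then 0 else eqToHom (hX'i i h).symm
  let k : X' ⟶ Y := fun i => if h : i = j then 0 else eqToHom (hX'i i h) ≫ f i
  have hfactor : f = g ≫ k := by
    funext i
    show f i = g i ≫ k i
    by_cases h : i = j
    · subst h; simp [g, k, hf]
    · simp [g, k, h]
  have hz : IsZero (H.obj X') := hH X' ⟨j, by rw [hX'j]; exact isZero_zero B⟩
  rw [hfactor, H.map_comp, hz.eq_of_tgt (H.map g) 0, zero_comp]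

noncomputable def iotas (X : Fin (n + 1) → B) : X ⟶ (diagF n).obj (⨁ X) := fun i => biproduct.ι X i

noncomputable def gammaApp (G : B ⥤ A) (H : (Fin (n + 1) → B) ⥤ A) (α : diagF n ⋙ H ⟶ G)
    (X : Fin (n + 1) → B) : H.obj X ⟶ G.obj (⨁ X) :=
  H.map (iotas n X) ≫ α.app (⨁ X)

lemma iota_comp_collapse_self (X : Fin (n + 1) → B) (j : Fin (n + 1)) :
    biproduct.ι X j ≫ collapse X j = 0 := by
  ext k
  simp [collapse, biproduct.ι_π_ne _ (Fin.ne_succAbove j k)]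

lemma gammaApp_comp (G : B ⥤ A) (H : (Fin (n + 1) → B) ⥤ A) (α : diagF n ⋙ H ⟶ G)
    (hH : ∀ Xs : Fin (n + 1) → B, (∃ i, IsZero (Xs i)) → IsZero (H.obj Xs))
    (X : Fin (n + 1) → B) :
    gammaApp n G H α X ≫ biproduct.lift (fun j : Fin (n + 1) => G.map (collapse X j)) = 0 := by
  ext j
  simp only [Category.assoc, biproduct.lift_π, zero_comp]
  rw [gammaApp, Category.assoc, ← α.naturality (collapse X j), Functor.comp_map,
    ← Category.assoc, ← H.map_comp]
  have hz : H.map (iotas n X ≫ (diagF n).map (collapse X j)) = 0 := by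
    refine H_map_eq_zero n H hH _ j ?_
    show biproduct.ι X j ≫ collapse X j = 0
    exact iota_comp_collapse_self n X j
  rw [hz, zero_comp]

noncomputable def betaHom (G : B ⥤ A) (H : (Fin (n + 1) → B) ⥤ A)
    (hH : ∀ Xs : Fin (n + 1) → B, (∃ i, IsZero (Xs i)) → IsZero (H.obj Xs))
    (α : diagF n ⋙ H ⟶ G) : H ⟶ crN n G where
  app X := kernel.lift _ (gammaApp n G H α X) (gammaApp_comp n G H α hH X)
  naturality {X Y} f := by
    show _ ≫ kernel.lift _ _ _ = kernel.lift _ _ _ ≫ crObjMapObj n G f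
    refine (cancel_mono (kernel.ι (biproduct.lift fun j : Fin (n + 1) => G.map (collapse Y j)))).1 ?_
    simp only [crObjMapObj, kernel.map, Category.assoc, kernel.lift_ι, kernel.lift_ι_assoc]
    erw [Category.assoc, kernel.lift_ι, kernel.lift_ι_assoc]
    rw [gammaApp, gammaApp, Category.assoc, ← α.naturality (biproduct.map f), Functor.comp_map,
      ← Category.assoc, ← Category.assoc, ← H.map_comp, ← H.map_comp]
    refine congrArg (fun t => H.map t ≫ α.app (⨁ Y)) ?_
    show f ≫ iotas n Y = iotas n X ≫ (diagF n).map (biproduct.map f)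
    funext i
    show f i ≫ biproduct.ι Y i = biproduct.ι X i ≫ biproduct.map f
    rw [biproduct.ι_map]

lemma bimap_iota_fold (X : Fin (n + 1) → B) :
    biproduct.map (iotas n X) ≫
      biproduct.desc (fun _ : Fin (n + 1) => 𝟙 (⨁ X)) = 𝟙 (⨁ X) := by
  refine biproduct.hom_ext' _ _ fun j => ?_
  rw [biproduct.ι_map_assoc]
  erw [biproduct.ι_desc, Category.comp_id]

lemma crN_map_iota_counit (G : B ⥤ A) (X : Fin (n + 1) → B) :
    (crN n G).map (iotas n X) ≫
      (crCounit n G).app (⨁ X) =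
    kernel.ι (biproduct.lift fun j : Fin (n + 1) => G.map (collapse X j)) := by
  show crObjMapObj n G _ ≫
    (kernel.ι _ ≫ G.map (biproduct.desc fun _ : Fin (n + 1) => 𝟙 (⨁ X))) = _
  simp only [crObjMapObj, kernel.map]
  erw [kernel.lift_ι_assoc]
  erw [Category.assoc, ← G.map_comp]
  exact (congrArg (fun t => kernel.ι (biproduct.lift fun j : Fin (n + 1) =>
      G.map (collapse X j)) ≫ G.map t) (bimap_iota_fold n X)).trans
    (by rw [G.map_id, Category.comp_id])

end CrossEffectAux

/-- For every `n ≥ 1` (here the arity is `n + 1`): the `(n+1)`-st cross effect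
`cr_{n+1} F` of any functor `F : ℬ ⥤ 𝒜` is strictly multi-reduced (it vanishes as soon as one of
its arguments is a zero object), and the resulting functor `cr_{n+1}` from functors `ℬ ⥤ 𝒜` to
strictly multi-reduced functors `ℬ^{n+1} ⥤ 𝒜` is right adjoint to precomposition with the
diagonal `Δ : ℬ ⥤ ℬ^{n+1}`: the canonical counit `crCounit` (kernel inclusion followed by the
fold map) exhibits, for every `G : ℬ ⥤ 𝒜`, unique factorizations of natural transformations
`Δ* H ⟶ G` with `H` strictly multi-reduced through `H ⟶ cr_{n+1} G`. -/
theorem crN_multireduced_and_adjoint_to_diagonal (n : ℕ) :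
    (∀ (F : B ⥤ A) (Xs : Fin (n + 1) → B),
      (∃ i, IsZero (Xs i)) → IsZero ((crN n F).obj Xs)) ∧
    (∀ (G : B ⥤ A) (H : (Fin (n + 1) → B) ⥤ A),
      (∀ Xs : Fin (n + 1) → B, (∃ i, IsZero (Xs i)) → IsZero (H.obj Xs)) →
      ∀ α : diagF n ⋙ H ⟶ G,
        ∃! β : H ⟶ crN n G, Functor.whiskerLeft (diagF n) β ≫ crCounit n G = α) := by
  constructor
  · exact fun F Xs h => crObj_isZero n F Xs h
  · intro G H hH α
    refine ⟨betaHom n G H hH α, ?_, ?_⟩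
    · ext X
      show (betaHom n G H hH α).app ((diagF n).obj X) ≫ (crCounit n G).app X = α.app X
      show kernel.lift _ _ _ ≫ kernel.ι _ ≫
        G.map (show (⨁ (diagF n).obj X) ⟶ X from biproduct.desc fun _ : Fin (n + 1) => 𝟙 X)
        = α.app X
      rw [kernel.lift_ι_assoc, gammaApp, Category.assoc,
        ← α.naturality (show (⨁ (diagF n).obj X) ⟶ X from
          biproduct.desc fun _ : Fin (n + 1) => 𝟙 X), Functor.comp_map,
        ← Category.assoc, ← H.map_comp]
      have : iotas n ((diagF n).obj X) ≫
          (diagF n).map (show (⨁ (diagF n).obj X) ⟶ X from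
            biproduct.desc fun _ : Fin (n + 1) => 𝟙 X) = 𝟙 ((diagF n).obj X) := by
        funext i
        show biproduct.ι ((diagF n).obj X) i ≫
          biproduct.desc (fun _ : Fin (n + 1) => 𝟙 X) = 𝟙 X
        erw [biproduct.ι_desc]
      rw [this, H.map_id]
      exact Category.id_comp _
    · intro β' hβ'
      ext X
      refine (cancel_mono (kernel.ι (biproduct.lift fun j : Fin (n + 1) =>
        G.map (collapse X j)))).1 ?_
      show β'.app X ≫ kernel.ι _ = kernel.lift _ _ _ ≫ kernel.ι _
      rw [kernel.lift_ι, gammaApp]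
      have h1 : β'.app ((diagF n).obj (⨁ X)) ≫ (crCounit n G).app (⨁ X) = α.app (⨁ X) :=
        congrArg (fun t => t.app (⨁ X)) hβ'
      rw [← h1]
      have h2 := β'.naturality (iotas n X)
      rw [← Category.assoc, h2, Category.assoc, crN_map_iota_counit n G X]
end

section
/- Let ℬ and 𝒜 be abelian categories and n ≥ 1. The n-th cross effect is exact: if F → G → H are natural transformations between functors ℬ ⥤ 𝒜 forming an objectwise short exact sequence 0 → F(X) → G(X) → H(X) → 0 for every X, then for every tuple (X₁,…,Xₙ) of objects of ℬ the induced sequence 0 → cr_nF(X₁,…,Xₙ) → cr_nG(X₁,…,Xₙ) → cr_nH(X₁,…,Xₙ) → 0 is short exact in 𝒜. In particular the diagonal functor C_nF(X) := cr_nF(X,…,X) is exact in F. -/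
/-!
Statement 4: For abelian categories ℬ, 𝒜 and `n ≥ 1`, the `n`-th cross effect is exact:
an objectwise short exact sequence `0 → F → G → H → 0` of functors `ℬ ⥤ 𝒜` induces, for
every tuple of objects, a short exact sequence of `n`-th cross effects.  In particular the
diagonal `C_n F (X) := cr_n F (X,…,X)` is exact in `F`.

Here `crObj n F` denotes the `(n+1)`-st cross effect of `F` (so as `n` ranges over `ℕ` the
arity ranges over all integers `≥ 1`), defined by the kernel formula
`cr_m F (X₁,…,X_m) = ker (F (X₁ ⊕ ⋯ ⊕ X_m) ⟶ ⨁_j F (X₁ ⊕ ⋯ ⊕ X_{j-1} ⊕ X_{j+1} ⊕ ⋯ ⊕ X_m))`.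
-/

open CategoryTheory CategoryTheory.Limits ZeroObject

attribute [local instance] CategoryTheory.Abelian.hasFiniteBiproducts

universe v u v' u'

variable {B : Type u} [Category.{v} B] [Abelian B]
variable {A : Type u'} [Category.{v'} A] [Abelian A]

/-- The map induced on `(n+1)`-st cross effects by a natural transformation. -/
noncomputable def crObjMapNat (n : ℕ) {F G : B ⥤ A} (α : F ⟶ G) (X : Fin (n + 1) → B) :
    crObj n F X ⟶ crObj n G X :=
  kernel.map (biproduct.lift fun j : Fin (n + 1) => F.map (collapse X j))
    (biproduct.lift fun j : Fin (n + 1) => G.map (collapse X j))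
    (α.app (⨁ X)) (biproduct.map fun j => α.app (⨁ (X ∘ j.succAbove)))
    (by ext j; simp)


namespace CrAux
variable {n : ℕ}
noncomputable def q (X : Fin (n + 1) → B) (S : Finset (Fin (n + 1))) : (⨁ X) ⟶ (⨁ X) :=
  biproduct.lift fun k => if k ∈ S then 0 else biproduct.π X k
@[simp] lemma q_π (X : Fin (n + 1) → B) (S : Finset (Fin (n + 1))) (k : Fin (n + 1)) :
    q X S ≫ biproduct.π X k = if k ∈ S then 0 else biproduct.π X k :=
  biproduct.lift_π _ _
lemma q_empty (X : Fin (n + 1) → B) : q X (∅ : Finset (Fin (n+1))) = 𝟙 _ := by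
  ext k; simp [q]
lemma q_comp (X : Fin (n + 1) → B) (S T : Finset (Fin (n + 1))) :
    q X S ≫ q X T = q X (S ∪ T) := by
  ext k
  by_cases hT : k ∈ T <;> by_cases hS : k ∈ S <;> simp [q, hT, hS]
lemma q_singleton (X : Fin (n + 1) → B) (j : Fin (n + 1)) :
    q X {j} = 𝟙 _ - biproduct.π X j ≫ biproduct.ι X j := by
  ext k
  rcases eq_or_ne k j with rfl | h
  · simp [q]
  · simp [q, h, biproduct.ι_π_ne X h.symm]
noncomputable def incl (X : Fin (n + 1) → B) (j : Fin (n + 1)) :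
    (⨁ (X ∘ j.succAbove)) ⟶ ⨁ X :=
  biproduct.desc fun m => biproduct.ι X (j.succAbove m)
lemma collapse_incl (X : Fin (n + 1) → B) (j : Fin (n + 1)) :
    collapse X j ≫ incl X j = q X {j} := by
  rw [q_singleton, collapse, incl, biproduct.lift_desc]
  have h := Fin.sum_univ_succAbove (fun k => biproduct.π X k ≫ biproduct.ι X k) j
  rw [biproduct.total] at h
  exact (eq_sub_of_add_eq' h.symm)
lemma q_singleton_comp_collapse (X : Fin (n + 1) → B) (j : Fin (n + 1)) :
    q X {j} ≫ collapse X j = collapse X j := by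
  ext m
  simp [collapse, Fin.succAbove_ne j m]

/-- The Eilenberg–MacLane idempotent. -/
noncomputable def e (F : B ⥤ A) (X : Fin (n + 1) → B) : F.obj (⨁ X) ⟶ F.obj (⨁ X) :=
  ∑ S ∈ (Finset.univ : Finset (Fin (n + 1))).powerset, (-1 : ℤ) ^ S.card • F.map (q X S)

lemma key_sum (F : B ⥤ A) (X : Fin (n + 1) → B) (j : Fin (n + 1)) :
    ∑ S ∈ (Finset.univ : Finset (Fin (n + 1))).powerset,
      ((-1 : ℤ) ^ S.card • F.map (q X (insert j S))) = 0 := by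
  classical
  apply Finset.sum_ninvolution (g := fun S => if j ∈ S then S.erase j else insert j S)
  · intro S
    by_cases h : j ∈ S
    · simp only [h, if_pos]
      rw [Finset.insert_erase h, Finset.insert_eq_self.2 h]
      have hc : S.card = (S.erase j).card + 1 := (Finset.card_erase_add_one h).symm
      rw [hc, pow_succ, mul_neg_one, neg_smul, neg_add_cancel]
    · simp only [h, if_neg, not_false_iff]
      rw [Finset.insert_idem, Finset.card_insert_of_notMem h, pow_succ, mul_neg_one,
        neg_smul, add_neg_cancel]
  · intro S _
    by_cases h : j ∈ S
    · simp only [h, if_pos]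
      exact fun hh => (Finset.erase_eq_self.1 hh) h
    · simp only [h, if_neg, not_false_iff]
      exact fun hh => h (Finset.insert_eq_self.1 hh)
  · intro S
    split <;> simp [Finset.mem_powerset]
  · intro S
    by_cases h : j ∈ S
    · simp [h, Finset.insert_erase h]
    · simp [h, Finset.erase_insert h]

lemma e_comp_map_q_singleton (F : B ⥤ A) (X : Fin (n + 1) → B) (j : Fin (n + 1)) :
    e F X ≫ F.map (q X {j}) = 0 := by
  rw [e, Preadditive.sum_comp]
  rw [← key_sum F X j]
  apply Finset.sum_congr rfl
  intro S _
  rw [Preadditive.zsmul_comp, ← F.map_comp, q_comp, Finset.union_comm, ← Finset.insert_eq]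

lemma e_comp_map_collapse (F : B ⥤ A) (X : Fin (n + 1) → B) (j : Fin (n + 1)) :
    e F X ≫ F.map (collapse X j) = 0 := by
  rw [← q_singleton_comp_collapse X j, F.map_comp, ← Category.assoc,
    e_comp_map_q_singleton, zero_comp]


/-- The cross-effect defining map. -/
noncomputable abbrev d (F : B ⥤ A) (X : Fin (n + 1) → B) :
    F.obj (⨁ X) ⟶ ⨁ fun j : Fin (n + 1) => F.obj (⨁ (X ∘ j.succAbove)) :=
  biproduct.lift fun j : Fin (n + 1) => F.map (collapse X j)

lemma kernelι_comp_map_collapse (F : B ⥤ A) (X : Fin (n + 1) → B) (j : Fin (n + 1)) :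
    kernel.ι (d F X) ≫ F.map (collapse X j) = 0 := by
  have h : F.map (collapse X j) = d F X ≫ biproduct.π _ j :=
    (biproduct.lift_π (fun j : Fin (n + 1) => F.map (collapse X j)) j).symm
  rw [h, ← Category.assoc, kernel.condition, zero_comp]

lemma kernelι_comp_e (F : B ⥤ A) (X : Fin (n + 1) → B) :
    kernel.ι (d F X) ≫ e F X = kernel.ι (d F X) := by
  rw [e, Preadditive.comp_sum]
  rw [Finset.sum_eq_single (∅ : Finset (Fin (n + 1)))]
  · rw [Preadditive.comp_zsmul, q_empty, CategoryTheory.Functor.map_id, Category.comp_id]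
    simp
  · intro S _ hS
    obtain ⟨j, hj⟩ := Finset.nonempty_iff_ne_empty.2 hS
    have hq : q X S = q X {j} ≫ q X S := by
      rw [q_comp]
      congr 1
      exact (Finset.union_eq_right.2 (by simpa using hj)).symm
    rw [Preadditive.comp_zsmul, hq, F.map_comp, ← collapse_incl, F.map_comp,
      ← Category.assoc, ← Category.assoc, kernelι_comp_map_collapse, zero_comp,
      zero_comp, smul_zero]
  · intro h
    exact absurd (by simp) h

lemma e_comp_d (F : B ⥤ A) (X : Fin (n + 1) → B) : e F X ≫ d F X = 0 := by
  apply biproduct.hom_ext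
  intro j
  rw [Category.assoc, biproduct.lift_π, e_comp_map_collapse, zero_comp]

lemma e_natural {F G : B ⥤ A} (α : F ⟶ G) (X : Fin (n + 1) → B) :
    e F X ≫ α.app (⨁ X) = α.app (⨁ X) ≫ e G X := by
  rw [e, e, Preadditive.sum_comp, Preadditive.comp_sum]
  apply Finset.sum_congr rfl
  intro S _
  rw [Preadditive.zsmul_comp, Preadditive.comp_zsmul, α.naturality]

/-- The natural retraction of `F(⊕X)` onto the cross effect. -/
noncomputable def r (F : B ⥤ A) (X : Fin (n + 1) → B) :
    F.obj (⨁ X) ⟶ kernel (d F X) :=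
  kernel.lift (d F X) (e F X) (e_comp_d F X)

@[simp] lemma r_ι (F : B ⥤ A) (X : Fin (n + 1) → B) :
    r F X ≫ kernel.ι (d F X) = e F X := kernel.lift_ι _ _ _

lemma ι_r (F : B ⥤ A) (X : Fin (n + 1) → B) :
    kernel.ι (d F X) ≫ r F X = 𝟙 _ := by
  rw [← cancel_mono (kernel.ι (d F X)), Category.assoc, r_ι, kernelι_comp_e,
    Category.id_comp]

end CrAux

namespace CrAux

lemma crMap_ι {n : ℕ} {F G : B ⥤ A} (α : F ⟶ G) (X : Fin (n + 1) → B) :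
    crObjMapNat n α X ≫ kernel.ι (d G X) = kernel.ι (d F X) ≫ α.app (⨁ X) :=
  kernel.lift_ι _ _ _

lemma r_natural {n : ℕ} {F G : B ⥤ A} (α : F ⟶ G) (X : Fin (n + 1) → B) :
    r F X ≫ crObjMapNat n α X = α.app (⨁ X) ≫ r G X := by
  refine (cancel_mono (kernel.ι (d G X))).1 ?_
  have h1 : r F X ≫ crObjMapNat n α X ≫ kernel.ι (d G X) =
      α.app (⨁ X) ≫ r G X ≫ kernel.ι (d G X) := by
    calc r F X ≫ crObjMapNat n α X ≫ kernel.ι (d G X)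
        = r F X ≫ kernel.ι (d F X) ≫ α.app (⨁ X) :=
          congrArg (fun f : crObj n F X ⟶ G.obj (⨁ X) => r F X ≫ f) (crMap_ι α X)
      _ = (r F X ≫ kernel.ι (d F X)) ≫ α.app (⨁ X) := (Category.assoc _ _ _).symm
      _ = e F X ≫ α.app (⨁ X) := by rw [r_ι]
      _ = α.app (⨁ X) ≫ e G X := e_natural α X
      _ = α.app (⨁ X) ≫ r G X ≫ kernel.ι (d G X) := by rw [r_ι]
  exact (Category.assoc _ _ _).trans (h1.trans (Category.assoc _ _ _).symm)

end CrAux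

/-- The `(n+1)`-st cross effect is exact: an objectwise short exact sequence
`0 → F → G → H → 0` of functors induces, on every tuple `(X₀,…,Xₙ)` of objects of `ℬ`, a short
exact sequence `0 → cr F (Xs) → cr G (Xs) → cr H (Xs) → 0` in 𝒜.  In particular the diagonal
`C_{n+1} F (X) = cr_{n+1} F (X,…,X)` is exact in `F`. -/
theorem crN_exact (n : ℕ) {F G H : B ⥤ A} (α : F ⟶ G) (β : G ⟶ H)
    (hw : ∀ X : B, α.app X ≫ β.app X = 0)
    (hse : ∀ X : B, (ShortComplex.mk (α.app X) (β.app X) (hw X)).ShortExact) :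
    (∀ Xs : Fin (n + 1) → B, ∃ w : crObjMapNat n α Xs ≫ crObjMapNat n β Xs = 0,
      (ShortComplex.mk (crObjMapNat n α Xs) (crObjMapNat n β Xs) w).ShortExact) ∧
    (∀ X : B, ∃ w : crObjMapNat n α (fun _ => X) ≫ crObjMapNat n β (fun _ => X) = 0,
      (ShortComplex.mk (crObjMapNat n α (fun _ => X)) (crObjMapNat n β (fun _ => X))
        w).ShortExact) := by
  have main : ∀ Xs : Fin (n + 1) → B,
      ∃ w : crObjMapNat n α Xs ≫ crObjMapNat n β Xs = 0,
      (ShortComplex.mk (crObjMapNat n α Xs) (crObjMapNat n β Xs) w).ShortExact := by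
    intro Xs
    haveI hmα : ∀ Y : B, Mono (α.app Y) := fun Y => (hse Y).mono_f
    haveI hepβ : ∀ Y : B, Epi (β.app Y) := fun Y => (hse Y).epi_g
    have crα_ι : crObjMapNat n α Xs ≫ kernel.ι (CrAux.d G Xs) =
        kernel.ι (CrAux.d F Xs) ≫ α.app (⨁ Xs) := CrAux.crMap_ι α Xs
    have crβ_ι : crObjMapNat n β Xs ≫ kernel.ι (CrAux.d H Xs) =
        kernel.ι (CrAux.d G Xs) ≫ β.app (⨁ Xs) := CrAux.crMap_ι β Xs
    have w : crObjMapNat n α Xs ≫ crObjMapNat n β Xs = 0 := by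
      erw [← cancel_mono (kernel.ι (CrAux.d H Xs)), Category.assoc, crβ_ι, ← Category.assoc,
        crα_ι, Category.assoc, hw, comp_zero, zero_comp]
    haveI mono_crα : Mono (crObjMapNat n α Xs) := by
      haveI : Mono (crObjMapNat n α Xs ≫ kernel.ι (CrAux.d G Xs)) := by
        rw [crα_ι]; exact mono_comp' (inferInstanceAs (Mono (kernel.ι (CrAux.d F Xs)))) inferInstance
      exact mono_of_mono _ (kernel.ι (CrAux.d G Xs))
    haveI epi_crβ : Epi (crObjMapNat n β Xs) := by
      haveI : IsSplitEpi (CrAux.r H Xs) := IsSplitEpi.mk' ⟨kernel.ι _, CrAux.ι_r H Xs⟩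
      haveI : Epi (CrAux.r G Xs ≫ crObjMapNat n β Xs) := by
        rw [CrAux.r_natural β Xs]; exact epi_comp' inferInstance (inferInstanceAs (Epi (CrAux.r H Xs)))
      exact epi_of_epi (CrAux.r G Xs) _
    have hlim : IsLimit (KernelFork.ofι (crObjMapNat n α Xs) w) := by
      refine KernelFork.IsLimit.ofι' _ _ (fun {T} t ht => ?_)
      have h1 : (t ≫ kernel.ι (CrAux.d G Xs)) ≫ β.app (⨁ Xs) = 0 := by
        erw [Category.assoc, ← crβ_ι, ← Category.assoc, ht, zero_comp]
      obtain ⟨u, hu'⟩ := KernelFork.IsLimit.lift' (hse (⨁ Xs)).fIsKernel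
        (t ≫ kernel.ι (CrAux.d G Xs)) h1
      have hu : u ≫ α.app (⨁ Xs) = t ≫ kernel.ι (CrAux.d G Xs) := by simpa using hu'
      have hud : u ≫ CrAux.d F Xs = 0 := by
        apply biproduct.hom_ext
        intro j
        rw [Category.assoc, biproduct.lift_π, zero_comp,
          ← cancel_mono (α.app (⨁ (Xs ∘ j.succAbove))), Category.assoc,
          α.naturality (collapse Xs j)]
        erw [← Category.assoc, hu, Category.assoc,
          CrAux.kernelι_comp_map_collapse G Xs j, comp_zero, zero_comp]
      refine ⟨kernel.lift (CrAux.d F Xs) u hud, ?_⟩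
      erw [← cancel_mono (kernel.ι (CrAux.d G Xs)), Category.assoc, crα_ι,
        ← Category.assoc, kernel.lift_ι, hu]
      rfl
    have hexact : (ShortComplex.mk (crObjMapNat n α Xs) (crObjMapNat n β Xs) w).Exact :=
      ShortComplex.exact_of_f_is_kernel _ hlim
    exact ⟨w, ShortComplex.ShortExact.mk' hexact mono_crα epi_crβ⟩
  exact ⟨main, fun X => main (fun _ => X)⟩
end

section
/- Let ι : A → B be a morphism of first-quadrant bicomplexes in an abelian category (so ι∘d = d∘ι and ι∘e = e∘ι), with maps f : B_{p,q} → A_{p,q} satisfying f∘d = d∘f and f∘ι = id, and maps s : B_{p,q} → B_{p,q+1} satisfying d∘s + s∘d = id − ι∘f and s∘ι = 0. Writing (−es)^k := (−1)^k (e∘s)^k and (−se)^k := (−1)^k (s∘e)^k, for every k ≥ 0 the following identities of morphisms hold (between the appropriate bigraded components): (i) e∘f∘(−es)^k + d∘f∘(−es)^{k+1} = f∘(−es)^k∘e + f∘(−es)^{k+1}∘d; (ii) e∘s∘(−es)^k + d∘s∘(−es)^{k+1} = −ι∘f∘(−es)^{k+1} − s∘d∘(−es)^{k+1}; (iii) s∘(−es)^{k+1}∘d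 + s∘(−es)^k∘e = −(−se)^{k+1}∘d∘s; (iv) s∘d∘(−es)^{k+1} = −(−se)^{k+1}∘d∘s. -/
/-!
Statement 18: Let `ι : A → B` be a morphism of first-quadrant bicomplexes in an abelian
category (`ι` commutes with both differentials), with maps `f : B_{p,q} → A_{p,q}` satisfying
`f ∘ d = d ∘ f` and `f ∘ ι = id`, and maps `s : B_{p,q} → B_{p,q+1}` satisfying
`d ∘ s + s ∘ d = id − ι ∘ f` and `s ∘ ι = 0` (with the convention that `d` out of the zeroth
column and `s` into it are zero).  Writing `(−es)^k := (−1)^k (e ∘ s)^k` and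
`(−se)^k := (−1)^k (s ∘ e)^k`, for every `k ≥ 0` the following identities hold between the
appropriate bigraded components (the boundary cases at `q = 0`, where the leading horizontal
differential vanishes by convention, are stated separately):
(i)   `e f (−es)^k + d f (−es)^{k+1} = f (−es)^k e + f (−es)^{k+1} d`;
(ii)  `e s (−es)^k + d s (−es)^{k+1} = −ι f (−es)^{k+1} − s d (−es)^{k+1}`;
(iii) `s (−es)^{k+1} d + s (−es)^k e = −(−se)^{k+1} d s`;
(iv)  `s d (−es)^{k+1} = −(−se)^{k+1} d s`.
-/

open CategoryTheory CategoryTheory.Limits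

attribute [local instance] CategoryTheory.Abelian.hasFiniteBiproducts
attribute [local instance] CategoryTheory.Limits.hasBinaryBiproducts_of_finite_biproducts

universe v u

variable (A : Type u) [Category.{v} A] [Abelian A]

/-- A first-quadrant bicomplex: objects `X p q` for `p, q ≥ 0`, horizontal differentials
`d : X p (q+1) ⟶ X p q`, vertical differentials `e : X (p+1) q ⟶ X p q`, with `d² = 0`,
`e² = 0` and anticommuting squares. -/
structure Bicomplex where
  X : ℕ → ℕ → A
  d : ∀ p q, X p (q + 1) ⟶ X p q
  e : ∀ p q, X (p + 1) q ⟶ X p q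
  dd : ∀ p q, d p (q + 1) ≫ d p q = 0
  ee : ∀ p q, e (p + 1) q ≫ e p q = 0
  anticomm : ∀ p q, d (p + 1) q ≫ e p q + e p (q + 1) ≫ d p q = 0

variable {A}

/-- The iterated diagonal map `(e ∘ s)^k : X_{c+k, b} ⟶ X_{c, b+k}` of a bicomplex (each
factor applies `s` and then `e`), with flexible indexing via the proofs `a = c + k`,
`d = b + k`. -/
noncomputable def esPow (Cb : Bicomplex A) (s : ∀ p q, Cb.X p q ⟶ Cb.X p (q + 1)) :
    ∀ (k a b c d : ℕ), a = c + k → d = b + k → (Cb.X a b ⟶ Cb.X c d)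
  | 0, a, b, c, d, ha, hd => eqToHom (congrArg₂ Cb.X (by omega) (by omega))
  | k + 1, a, b, c, d, ha, hd =>
      esPow Cb s k a b (c + 1) (b + k) (by omega) rfl ≫ s (c + 1) (b + k) ≫
        Cb.e c (b + k + 1) ≫ eqToHom (congrArg₂ Cb.X rfl (by omega))

/-- The iterated diagonal map `(s ∘ e)^k : X_{c+k, b} ⟶ X_{c, b+k}` of a bicomplex (each
factor applies `e` and then `s`), with flexible indexing. -/
noncomputable def sePow (Cb : Bicomplex A) (s : ∀ p q, Cb.X p q ⟶ Cb.X p (q + 1)) :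
    ∀ (k a b c d : ℕ), a = c + k → d = b + k → (Cb.X a b ⟶ Cb.X c d)
  | 0, a, b, c, d, ha, hd => eqToHom (congrArg₂ Cb.X (by omega) (by omega))
  | k + 1, a, b, c, d, ha, hd =>
      sePow Cb s k a b (c + 1) (b + k) (by omega) rfl ≫ Cb.e c (b + k) ≫
        s c (b + k) ≫ eqToHom (congrArg₂ Cb.X rfl (by omega))

/-- `(−es)^k := (−1)^k (e ∘ s)^k`. -/
noncomputable def negES (Cb : Bicomplex A) (s : ∀ p q, Cb.X p q ⟶ Cb.X p (q + 1))
    (k a b c d : ℕ) (ha : a = c + k) (hd : d = b + k) : Cb.X a b ⟶ Cb.X c d :=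
  ((-1 : ℤ) ^ k) • esPow Cb s k a b c d ha hd

/-- `(−se)^k := (−1)^k (s ∘ e)^k`. -/
noncomputable def negSE (Cb : Bicomplex A) (s : ∀ p q, Cb.X p q ⟶ Cb.X p (q + 1))
    (k a b c d : ℕ) (ha : a = c + k) (hd : d = b + k) : Cb.X a b ⟶ Cb.X c d :=
  ((-1 : ℤ) ^ k) • sePow Cb s k a b c d ha hd
section Helpers

variable {Ca Cb : Bicomplex A}

lemma ies (ι : ∀ p q, Ca.X p q ⟶ Cb.X p q) (s : ∀ p q, Cb.X p q ⟶ Cb.X p (q + 1))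
    (hιe : ∀ p q, ι (p + 1) q ≫ Cb.e p q = Ca.e p q ≫ ι p q)
    (hsι : ∀ p q, ι p q ≫ s p q = 0)
    (p q : ℕ) {Z : A} (h : Cb.X p (q + 1) ⟶ Z) :
    ι (p+1) q ≫ Cb.e p q ≫ s p q ≫ h = 0 := by
  rw [← Category.assoc, hιe, Category.assoc, reassoc_of% (hsι p q), zero_comp, comp_zero]

lemma ies0 (ι : ∀ p q, Ca.X p q ⟶ Cb.X p q) (s : ∀ p q, Cb.X p q ⟶ Cb.X p (q + 1))
    (hιe : ∀ p q, ι (p + 1) q ≫ Cb.e p q = Ca.e p q ≫ ι p q)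
    (hsι : ∀ p q, ι p q ≫ s p q = 0)
    (p q : ℕ) :
    ι (p+1) q ≫ Cb.e p q ≫ s p q = 0 := by
  rw [← Category.assoc, hιe, Category.assoc, hsι, comp_zero]

lemma ief (ι : ∀ p q, Ca.X p q ⟶ Cb.X p q) (f : ∀ p q, Cb.X p q ⟶ Ca.X p q)
    (hιe : ∀ p q, ι (p + 1) q ≫ Cb.e p q = Ca.e p q ≫ ι p q)
    (hfι : ∀ p q, ι p q ≫ f p q = 𝟙 (Ca.X p q))
    (p q : ℕ) :
    ι (p+1) q ≫ Cb.e p q ≫ f p q = Ca.e p q := by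
  rw [← Category.assoc, hιe, Category.assoc, hfι, Category.comp_id]

lemma dse (ι : ∀ p q, Ca.X p q ⟶ Cb.X p q) (f : ∀ p q, Cb.X p q ⟶ Ca.X p q)
    (s : ∀ p q, Cb.X p q ⟶ Cb.X p (q + 1))
    (hs : ∀ p q, s p (q + 1) ≫ Cb.d p (q + 1) + Cb.d p q ≫ s p q
      = 𝟙 (Cb.X p (q + 1)) - f p (q + 1) ≫ ι p (q + 1))
    (p q : ℕ) :
    Cb.d (p+1) q ≫ s (p+1) q ≫ Cb.e p (q+1)
    = Cb.e p (q+1) - f (p+1) (q+1) ≫ ι (p+1) (q+1) ≫ Cb.e p (q+1)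
      + s (p+1) (q+1) ≫ Cb.e p (q+1+1) ≫ Cb.d p (q+1) := by
  have h2 : Cb.d (p+1) q ≫ s (p+1) q
      = 𝟙 (Cb.X (p+1) (q+1)) - f (p+1) (q+1) ≫ ι (p+1) (q+1)
        - s (p+1) (q+1) ≫ Cb.d (p+1) (q+1) :=
    eq_sub_of_add_eq' (hs (p+1) q)
  have h3 : Cb.d (p+1) (q+1) ≫ Cb.e p (q+1) = -(Cb.e p (q+1+1) ≫ Cb.d p (q+1)) :=
    eq_neg_of_add_eq_zero_left (Cb.anticomm p (q+1))
  rw [← Category.assoc, h2]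
  simp only [Preadditive.sub_comp, Category.id_comp, Category.assoc, h3,
    Preadditive.comp_neg]
  abel

lemma sed' (ι : ∀ p q, Ca.X p q ⟶ Cb.X p q) (f : ∀ p q, Cb.X p q ⟶ Ca.X p q)
    (s : ∀ p q, Cb.X p q ⟶ Cb.X p (q + 1))
    (hs : ∀ p q, s p (q + 1) ≫ Cb.d p (q + 1) + Cb.d p q ≫ s p q
      = 𝟙 (Cb.X p (q + 1)) - f p (q + 1) ≫ ι p (q + 1))
    (p q : ℕ) {Z : A} (h : Cb.X p (q+1) ⟶ Z) :
    s (p+1) (q+1) ≫ Cb.e p (q+1+1) ≫ Cb.d p (q+1) ≫ h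
    = Cb.d (p+1) q ≫ s (p+1) q ≫ Cb.e p (q+1) ≫ h - Cb.e p (q+1) ≫ h
      + f (p+1) (q+1) ≫ ι (p+1) (q+1) ≫ Cb.e p (q+1) ≫ h := by
  have h3 : Cb.e p (q+1+1) ≫ Cb.d p (q+1) = -(Cb.d (p+1) (q+1) ≫ Cb.e p (q+1)) :=
    eq_neg_of_add_eq_zero_right (Cb.anticomm p (q+1))
  have h2 : s (p+1) (q+1) ≫ Cb.d (p+1) (q+1)
      = 𝟙 (Cb.X (p+1) (q+1)) - f (p+1) (q+1) ≫ ι (p+1) (q+1)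
        - Cb.d (p+1) q ≫ s (p+1) q :=
    eq_sub_of_add_eq (hs (p+1) q)
  rw [reassoc_of% h3]
  simp only [Preadditive.neg_comp, Preadditive.comp_neg, Category.assoc]
  rw [reassoc_of% h2]
  simp only [Preadditive.sub_comp, Category.id_comp, Category.assoc, neg_sub]
  abel

lemma sed (ι : ∀ p q, Ca.X p q ⟶ Cb.X p q) (f : ∀ p q, Cb.X p q ⟶ Ca.X p q)
    (s : ∀ p q, Cb.X p q ⟶ Cb.X p (q + 1))
    (hs : ∀ p q, s p (q + 1) ≫ Cb.d p (q + 1) + Cb.d p q ≫ s p q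
      = 𝟙 (Cb.X p (q + 1)) - f p (q + 1) ≫ ι p (q + 1))
    (p q : ℕ) :
    s (p+1) (q+1) ≫ Cb.e p (q+1+1) ≫ Cb.d p (q+1)
    = Cb.d (p+1) q ≫ s (p+1) q ≫ Cb.e p (q+1) - Cb.e p (q+1)
      + f (p+1) (q+1) ≫ ι (p+1) (q+1) ≫ Cb.e p (q+1) := by
  simpa using sed' ι f s hs p q (h := 𝟙 (Cb.X p (q+1)))

lemma sed0 (ι : ∀ p q, Ca.X p q ⟶ Cb.X p q) (f : ∀ p q, Cb.X p q ⟶ Ca.X p q)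
    (s : ∀ p q, Cb.X p q ⟶ Cb.X p (q + 1))
    (hs0 : ∀ p, s p 0 ≫ Cb.d p 0 = 𝟙 (Cb.X p 0) - f p 0 ≫ ι p 0)
    (p : ℕ) :
    s (p+1) 0 ≫ Cb.e p 1 ≫ Cb.d p 0
    = -Cb.e p 0 + f (p+1) 0 ≫ ι (p+1) 0 ≫ Cb.e p 0 := by
  have h3 : Cb.e p 1 ≫ Cb.d p 0 = -(Cb.d (p+1) 0 ≫ Cb.e p 0) :=
    eq_neg_of_add_eq_zero_right (Cb.anticomm p 0)
  rw [h3, Preadditive.comp_neg, ← Category.assoc, hs0]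
  simp only [Preadditive.sub_comp, Category.id_comp, Category.assoc]
  abel


lemma esPow_succ'' (s : ∀ p q, Cb.X p q ⟶ Cb.X p (q + 1))
    (k a b c m : ℕ) (ha : a = c + k + 1) (hm : m = b + k) :
    esPow Cb s (k+1) a b c (m+1) (by omega) (by omega)
    = esPow Cb s k a b (c+1) m (by omega) (by omega) ≫ s (c+1) m ≫ Cb.e c (m+1) := by
  subst hm
  rw [esPow]
  simp

lemma sePow_succ'' (s : ∀ p q, Cb.X p q ⟶ Cb.X p (q + 1))
    (k a b c m : ℕ) (ha : a = c + k + 1) (hm : m = b + k) :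
    sePow Cb s (k+1) a b c (m+1) (by omega) (by omega)
    = sePow Cb s k a b (c+1) m (by omega) (by omega) ≫ Cb.e c m ≫ s c m := by
  subst hm
  rw [sePow]
  simp

lemma esPow_comp_e (s : ∀ p q, Cb.X p q ⟶ Cb.X p (q + 1))
    (k a b c d : ℕ) (ha : a = c + k + 1 + 1) (hd : d = b + k + 1) :
    esPow Cb s (k+1) a b (c+1) d (by omega) (by omega) ≫ Cb.e c d = 0 := by
  subst hd
  simp [esPow, Category.assoc, Cb.ee]

lemma esPow_comp_e' (s : ∀ p q, Cb.X p q ⟶ Cb.X p (q + 1))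
    (k a b c d : ℕ) (ha : a = c + k + 1 + 1) (hd : d = b + k + 1)
    {Z : A} (h : Cb.X c d ⟶ Z) :
    esPow Cb s (k+1) a b (c+1) d (by omega) (by omega) ≫ Cb.e c d ≫ h = 0 := by
  rw [← Category.assoc, esPow_comp_e s k a b c d ha hd, zero_comp]


lemma d_esPow (ι : ∀ p q, Ca.X p q ⟶ Cb.X p q) (f : ∀ p q, Cb.X p q ⟶ Ca.X p q)
    (s : ∀ p q, Cb.X p q ⟶ Cb.X p (q + 1))
    (hιe : ∀ p q, ι (p + 1) q ≫ Cb.e p q = Ca.e p q ≫ ι p q)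
    (hsι : ∀ p q, ι p q ≫ s p q = 0)
    (hs : ∀ p q, s p (q + 1) ≫ Cb.d p (q + 1) + Cb.d p q ≫ s p q
      = 𝟙 (Cb.X p (q + 1)) - f p (q + 1) ≫ ι p (q + 1)) :
    ∀ (k b c a' d : ℕ) (ha : a' = c + k) (hd : d = b + k + 1),
    Cb.d (a'+1) b ≫ esPow Cb s (k+1) (a'+1) b c d (by omega) (by omega)
    = Cb.e a' (b+1) ≫ esPow Cb s k a' (b+1) c d (by omega) (by omega)
      - esPow Cb s k (a'+1) (b+1) (c+1) d (by omega) (by omega) ≫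
          f (c+1) d ≫ ι (c+1) d ≫ Cb.e c d
      + esPow Cb s (k+1) (a'+1) (b+1) c (d+1) (by omega) (by omega) ≫ Cb.d c d := by
  intro k
  induction k with
  | zero =>
    intro b c a' d ha hd
    obtain rfl : a' = c := by omega
    obtain rfl : d = b + 1 := by omega
    simp only [esPow, Nat.add_zero, Nat.zero_add, eqToHom_refl, Category.comp_id,
      Category.id_comp, Category.assoc]
    rw [dse ι f s hs a' b]
  | succ k ih =>
    intro b c a' d ha hd
    obtain rfl : a' = c + k + 1 := by omega
    obtain rfl : d = b + k + 1 + 1 := by omega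
    rw [esPow_succ'' s (k+1) (c+k+1+1) b c (b+k+1) (by omega) (by omega)]
    rw [reassoc_of% (ih b (c+1) (c+k+1) (b+k+1) (by omega) (by omega))]
    simp only [Preadditive.sub_comp, Preadditive.add_comp, Category.assoc]
    rw [ies ι s hιe hsι (c+1) (b+k+1) (h := Cb.e c (b+k+1+1))]
    rw [dse ι f s hs c (b+k+1)]
    simp only [Preadditive.comp_sub, Preadditive.comp_add, comp_zero, zero_comp,
      Category.assoc]
    rw [esPow_comp_e s k (c+k+1+1) (b+1) c (b+k+1+1) (by omega) (by omega)]
    rw [← esPow_succ'' s k (c+k+1) (b+1) c (b+k+1) (by omega) (by omega)]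
    rw [reassoc_of% (esPow_succ'' s (k+1) (c+k+1+1) (b+1) c (b+k+1+1)
      (by omega) (by omega)).symm]
    abel


lemma esPow_d0 (ι : ∀ p q, Ca.X p q ⟶ Cb.X p q) (f : ∀ p q, Cb.X p q ⟶ Ca.X p q)
    (s : ∀ p q, Cb.X p q ⟶ Cb.X p (q + 1))
    (hιe : ∀ p q, ι (p + 1) q ≫ Cb.e p q = Ca.e p q ≫ ι p q)
    (hsι : ∀ p q, ι p q ≫ s p q = 0)
    (hs0 : ∀ p, s p 0 ≫ Cb.d p 0 = 𝟙 (Cb.X p 0) - f p 0 ≫ ι p 0)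
    (hs : ∀ p q, s p (q + 1) ≫ Cb.d p (q + 1) + Cb.d p q ≫ s p q
      = 𝟙 (Cb.X p (q + 1)) - f p (q + 1) ≫ ι p (q + 1)) :
    ∀ (k c a' d : ℕ) (ha : a' = c + k) (hd : d = k),
    esPow Cb s (k+1) (a'+1) 0 c (d+1) (by omega) (by omega) ≫ Cb.d c d
    = -(Cb.e a' 0 ≫ esPow Cb s k a' 0 c d (by omega) (by omega))
      + esPow Cb s k (a'+1) 0 (c+1) d (by omega) (by omega) ≫
          f (c+1) d ≫ ι (c+1) d ≫ Cb.e c d := by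
  intro k
  induction k with
  | zero =>
    intro c a' d ha hd
    obtain rfl : a' = c := by omega
    obtain rfl : d = 0 := by omega
    simp only [esPow, Nat.add_zero, Nat.zero_add, eqToHom_refl, Category.comp_id,
      Category.id_comp, Category.assoc]
    rw [sed0 ι f s hs0 a']
  | succ k ih =>
    intro c a' d ha hd
    obtain rfl : a' = c + k + 1 := by omega
    obtain rfl : d = k + 1 := by omega
    rw [esPow_succ'' s (k+1) (c+k+1+1) 0 c (k+1) (by omega) (by omega), Category.assoc,
      Category.assoc]
    rw [sed ι f s hs c k]
    simp only [Preadditive.comp_sub, Preadditive.comp_add, Category.assoc]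
    rw [reassoc_of% (ih (c+1) (c+k+1) k (by omega) (by omega))]
    simp only [Preadditive.add_comp, Preadditive.neg_comp, Category.assoc]
    rw [ies ι s hιe hsι (c+1) k (h := Cb.e c (k+1))]
    rw [esPow_comp_e s k (c+k+1+1) 0 c (k+1) (by omega) (by omega)]
    rw [← esPow_succ'' s k (c+k+1) 0 c k (by omega) (by omega)]
    simp only [comp_zero, zero_comp]
    abel

lemma esPow_ds (ι : ∀ p q, Ca.X p q ⟶ Cb.X p q) (f : ∀ p q, Cb.X p q ⟶ Ca.X p q)
    (s : ∀ p q, Cb.X p q ⟶ Cb.X p (q + 1))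
    (hιe : ∀ p q, ι (p + 1) q ≫ Cb.e p q = Ca.e p q ≫ ι p q)
    (hsι : ∀ p q, ι p q ≫ s p q = 0)
    (hs : ∀ p q, s p (q + 1) ≫ Cb.d p (q + 1) + Cb.d p q ≫ s p q
      = 𝟙 (Cb.X p (q + 1)) - f p (q + 1) ≫ ι p (q + 1)) :
    ∀ (k a b c m : ℕ) (ha : a = c + k + 1) (hm : m = b + k),
    esPow Cb s (k+1) a b c (m+1) (by omega) (by omega) ≫ Cb.d c m ≫ s c m
    = -(s a b ≫ Cb.d a b ≫ sePow Cb s (k+1) a b c (m+1) (by omega) (by omega)) := by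
  intro k
  induction k with
  | zero =>
    intro a b c m ha hm
    obtain rfl : a = c + 1 := by omega
    obtain rfl : m = b := by omega
    simp only [esPow, sePow, Nat.add_zero, Nat.zero_add, eqToHom_refl, Category.comp_id,
      Category.id_comp, Category.assoc]
    have h3 : Cb.e c (m+1) ≫ Cb.d c m = -(Cb.d (c+1) m ≫ Cb.e c m) :=
      eq_neg_of_add_eq_zero_right (Cb.anticomm c m)
    rw [reassoc_of% h3]
    simp only [Preadditive.neg_comp, Preadditive.comp_neg, Category.assoc]
  | succ k ih =>
    intro a b c m ha hm
    obtain rfl : a = c + k + 1 + 1 := by omega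
    obtain rfl : m = b + k + 1 := by omega
    rw [esPow_succ'' s (k+1) (c+k+1+1) b c (b+k+1) (by omega) (by omega), Category.assoc,
      Category.assoc]
    rw [sed' ι f s hs c (b+k) (h := s c (b+k+1))]
    simp only [Preadditive.comp_sub, Preadditive.comp_add, Category.assoc]
    rw [reassoc_of% (ih (c+k+1+1) b (c+1) (b+k) (by omega) (by omega))]
    rw [ies0 ι s hιe hsι c (b+k+1)]
    rw [esPow_comp_e' s k (c+k+1+1) b c (b+k+1) (by omega) (by omega)
      (h := s c (b+k+1))]
    simp only [Preadditive.neg_comp, Category.assoc, comp_zero, zero_comp]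
    rw [← sePow_succ'' s (k+1) (c+k+1+1) b c (b+k+1) (by omega) (by omega)]
    abel

end Helpers
/-- **Statement 18.** The four families of identities (with their `q = 0` boundary variants
for (i) and (iii)) satisfied by the data of a row-wise strong deformation retraction of a
morphism of first-quadrant bicomplexes. -/
theorem bicomplex_retraction_identities {Ca Cb : Bicomplex A}
    (ι : ∀ p q, Ca.X p q ⟶ Cb.X p q)
    (hιd : ∀ p q, ι p (q + 1) ≫ Cb.d p q = Ca.d p q ≫ ι p q)
    (hιe : ∀ p q, ι (p + 1) q ≫ Cb.e p q = Ca.e p q ≫ ι p q)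
    (f : ∀ p q, Cb.X p q ⟶ Ca.X p q)
    (hfd : ∀ p q, f p (q + 1) ≫ Ca.d p q = Cb.d p q ≫ f p q)
    (hfι : ∀ p q, ι p q ≫ f p q = 𝟙 (Ca.X p q))
    (s : ∀ p q, Cb.X p q ⟶ Cb.X p (q + 1))
    (hs0 : ∀ p, s p 0 ≫ Cb.d p 0 = 𝟙 (Cb.X p 0) - f p 0 ≫ ι p 0)
    (hs : ∀ p q, s p (q + 1) ≫ Cb.d p (q + 1) + Cb.d p q ≫ s p q
      = 𝟙 (Cb.X p (q + 1)) - f p (q + 1) ≫ ι p (q + 1))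
    (hsι : ∀ p q, ι p q ≫ s p q = 0) :
    -- (i)
    (∀ p q k,
      negES Cb s k (p + k + 1) (q + 1) (p + 1) (q + k + 1) (by omega) (by omega) ≫
          f (p + 1) (q + k + 1) ≫ Ca.e p (q + k + 1)
        + negES Cb s (k + 1) (p + k + 1) (q + 1) p (q + k + 2) (by omega) (by omega) ≫
          f p (q + k + 2) ≫ Ca.d p (q + k + 1)
      = Cb.e (p + k) (q + 1) ≫
          negES Cb s k (p + k) (q + 1) p (q + k + 1) (by omega) (by omega) ≫ f p (q + k + 1)
        + Cb.d (p + k + 1) q ≫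
          negES Cb s (k + 1) (p + k + 1) q p (q + k + 1) (by omega) (by omega) ≫
          f p (q + k + 1)) ∧
    -- (i), boundary case q = 0
    (∀ p k,
      negES Cb s k (p + k + 1) 0 (p + 1) k (by omega) (by omega) ≫ f (p + 1) k ≫ Ca.e p k
        + negES Cb s (k + 1) (p + k + 1) 0 p (k + 1) (by omega) (by omega) ≫
          f p (k + 1) ≫ Ca.d p k
      = Cb.e (p + k) 0 ≫ negES Cb s k (p + k) 0 p k (by omega) (by omega) ≫ f p k) ∧
    -- (ii)
    (∀ p q k,
      negES Cb s k (p + k + 1) q (p + 1) (q + k) (by omega) (by omega) ≫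
          s (p + 1) (q + k) ≫ Cb.e p (q + k + 1)
        + negES Cb s (k + 1) (p + k + 1) q p (q + k + 1) (by omega) (by omega) ≫
          s p (q + k + 1) ≫ Cb.d p (q + k + 1)
      = -(negES Cb s (k + 1) (p + k + 1) q p (q + k + 1) (by omega) (by omega) ≫
          f p (q + k + 1) ≫ ι p (q + k + 1))
        - negES Cb s (k + 1) (p + k + 1) q p (q + k + 1) (by omega) (by omega) ≫
          Cb.d p (q + k) ≫ s p (q + k)) ∧
    -- (iii)
    (∀ p q k,
      Cb.d (p + k + 1) q ≫
          negES Cb s (k + 1) (p + k + 1) q p (q + k + 1) (by omega) (by omega) ≫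
          s p (q + k + 1)
        + Cb.e (p + k) (q + 1) ≫
          negES Cb s k (p + k) (q + 1) p (q + k + 1) (by omega) (by omega) ≫ s p (q + k + 1)
      = -(s (p + k + 1) (q + 1) ≫ Cb.d (p + k + 1) (q + 1) ≫
          negSE Cb s (k + 1) (p + k + 1) (q + 1) p (q + k + 2) (by omega) (by omega))) ∧
    -- (iii), boundary case q = 0
    (∀ p k,
      Cb.e (p + k) 0 ≫ negES Cb s k (p + k) 0 p k (by omega) (by omega) ≫ s p k
      = -(s (p + k + 1) 0 ≫ Cb.d (p + k + 1) 0 ≫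
          negSE Cb s (k + 1) (p + k + 1) 0 p (k + 1) (by omega) (by omega))) ∧
    -- (iv)
    (∀ p q k,
      negES Cb s (k + 1) (p + k + 1) q p (q + k + 1) (by omega) (by omega) ≫
          Cb.d p (q + k) ≫ s p (q + k)
      = -(s (p + k + 1) q ≫ Cb.d (p + k + 1) q ≫
          negSE Cb s (k + 1) (p + k + 1) q p (q + k + 1) (by omega) (by omega))) := by

  refine ⟨?_, ?_, ?_, ?_, ?_, ?_⟩
  · -- (i)
    intro p q k
    simp only [negES, Preadditive.zsmul_comp, Preadditive.comp_zsmul, Category.assoc,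
      show q + k + 2 = q + k + 1 + 1 from rfl]
    rw [reassoc_of% (d_esPow ι f s hιe hsι hs k q p (p+k) (q+k+1) (by omega) (by omega))]
    simp only [Preadditive.sub_comp, Preadditive.add_comp, Category.assoc]
    rw [ief ι f hιe hfι p (q+k+1)]
    rw [hfd p (q+k+1)]
    module
  · -- (i), q = 0
    intro p k
    simp only [negES, Preadditive.zsmul_comp, Preadditive.comp_zsmul, Category.assoc]
    rw [hfd p k]
    rw [reassoc_of% (esPow_d0 ι f s hιe hsι hs0 hs k p (p+k) k (by omega) rfl)]
    simp only [Preadditive.add_comp, Preadditive.neg_comp, Category.assoc]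
    rw [ief ι f hιe hfι p k]
    module
  · -- (ii)
    intro p q k
    have hsd : s p (q+k+1) ≫ Cb.d p (q+k+1)
        = 𝟙 (Cb.X p (q+k+1)) - f p (q+k+1) ≫ ι p (q+k+1) - Cb.d p (q+k) ≫ s p (q+k) :=
      eq_sub_of_add_eq (hs p (q+k))
    simp only [negES, Preadditive.zsmul_comp, Preadditive.comp_zsmul, Category.assoc]
    rw [← esPow_succ'' s k (p+k+1) q p (q+k) (by omega) (by omega)]
    rw [hsd]
    simp only [Preadditive.comp_sub, Preadditive.comp_add, Category.comp_id,
      Category.assoc]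
    module
  · -- (iii)
    intro p q k
    simp only [negES, negSE, Preadditive.zsmul_comp, Preadditive.comp_zsmul,
      Category.assoc, show q + k + 2 = q + k + 1 + 1 from rfl]
    rw [reassoc_of% (d_esPow ι f s hιe hsι hs k q p (p+k) (q+k+1) (by omega) (by omega))]
    simp only [Preadditive.sub_comp, Preadditive.add_comp, Category.assoc]
    rw [ies0 ι s hιe hsι p (q+k+1)]
    rw [esPow_ds ι f s hιe hsι hs k (p+k+1) (q+1) p (q+k+1) (by omega) (by omega)]
    simp only [comp_zero, zero_comp]
    module
  · -- (iii), q = 0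
    intro p k
    have h1 := (reassoc_of% (esPow_d0 ι f s hιe hsι hs0 hs k p (p+k) k (by omega) rfl))
      (s p k)
    simp only [Preadditive.add_comp, Preadditive.neg_comp, Category.assoc,
      ies0 ι s hιe hsι, comp_zero, add_zero] at h1
    have h2 := esPow_ds ι f s hιe hsι hs k (p+k+1) 0 p k (by omega) (by omega)
    have key := neg_injective (h1.symm.trans h2)
    simp only [negES, negSE, Preadditive.zsmul_comp, Preadditive.comp_zsmul,
      Category.assoc]
    rw [key]
    module
  · -- (iv)
    intro p q k
    simp only [negES, negSE, Preadditive.zsmul_comp, Preadditive.comp_zsmul,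
      Category.assoc]
    rw [esPow_ds ι f s hιe hsι hs k (p+k+1) q p (q+k) (by omega) (by omega)]
    module
end
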